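/- In a free group F with free basis {k₁, k₂, k₃, k₄}, for indices a ≠ b and c ≠ d in {1,2,3,4} with (a,b) ≠ (c,d) and either b ≠ c or d ≠ a, the elements f_{ab} = k_a⁻¹k_b and f_{cd} = k_c⁻¹k_d generate a free subgroup of rank 2. -/

import Mathlib

private lemma aux_retract (v : Fin 2 → FreeGroup (Fin 4))
    (φ : FreeGroup (Fin 4) →* FreeGroup (Fin 2))
    (h0 : φ (v 0) = FreeGroup.of 0) (h1 : φ (v 1) = FreeGroup.of 1) :
    Function.Injective ⇑(FreeGroup.lift v) := by
  have hcomp : φ.comp (FreeGroup.lift v) = MonoidHom.id _ := by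
    apply FreeGroup.ext_hom
    intro i
    fin_cases i <;> simp [h0, h1]
  intro x y hxy
  have hx := DFunLike.congr_fun hcomp x
  have hy := DFunLike.congr_fun hcomp y
  simp only [MonoidHom.coe_comp, Function.comp_apply, MonoidHom.id_apply] at hx hy
  rw [← hx, ← hy, hxy]

theorem stmt_5 (a b c d : Fin 4) (hab : a ≠ b) (hcd : c ≠ d)
    (hne : (a, b) ≠ (c, d)) (h : b ≠ c ∨ d ≠ a) :
    Function.Injective
      ⇑(FreeGroup.lift
          ![(FreeGroup.of a)⁻¹ * FreeGroup.of b, (FreeGroup.of c)⁻¹ * FreeGroup.of d] :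
        FreeGroup (Fin 2) →* FreeGroup (Fin 4)) := by
  set x : FreeGroup (Fin 2) := FreeGroup.of 0 with hx
  set y : FreeGroup (Fin 2) := FreeGroup.of 1 with hy
  set g : Fin 4 → FreeGroup (Fin 2) := fun i =>
    if i = a then 1
    else if i = b then x
    else if i = c then (if d = a then y⁻¹ else if d = b then x * y⁻¹ else 1)
    else if i = d then (if b = c then x * y else y)
    else 1 with hg
  apply aux_retract _ (FreeGroup.lift g)
  · simp only [Matrix.cons_val_zero, map_mul, map_inv, FreeGroup.lift_apply_of, hg]
    simp [hab, hab.symm, hx]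
  · simp only [Matrix.cons_val_one, Matrix.head_cons, map_mul, map_inv, FreeGroup.lift_apply_of, hg]
    have hne' : a ≠ c ∨ b ≠ d := by
      by_contra hc
      push_neg at hc
      exact hne (by simp [hc.1, hc.2])
    rcases eq_or_ne c a with rfl | hca
    · -- c = a, so d ≠ a, and d ≠ b (else (a,b)=(c,d))
      have hdb : d ≠ b := by
        rcases hne' with h' | h'
        · exact absurd rfl h'
        · exact fun e => h' e.symm
      simp [hcd.symm, hdb, hcd, hab, hab.symm, hy]
    · rcases eq_or_ne c b with rfl | hcb
      · -- c = b  (so by h, d ≠ a)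
        have hda : d ≠ a := by
          rcases h with h' | h'
          · exact absurd rfl h'
          · exact h'
        simp [hca, hcd.symm, hda, hcd, hy]
      · -- c ∉ {a, b}
        rcases eq_or_ne d a with rfl | hda
        · simp [hca, hcb, hcd, hy]
        · rcases eq_or_ne d b with rfl | hdb
          · simp [hca, hcb, hcd, hda, (Ne.symm hcb), hy]
          · simp [hca, hcb, hcd, hda, hdb, hcd.symm, Ne.symm hcb, hy]
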